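/- Let f : A →* B be a monoid homomorphism which has the left lifting property against all surjective monoid homomorphisms. Let ε : FreeMonoid B →* B be the canonical homomorphism extending the identity function of B, let inl : A →* A ∗ FreeMonoid B be the coproduct inclusion, and let p : A ∗ FreeMonoid B →* B be the homomorphism induced by f and ε. Then p is surjective, and there exists a monoid homomorphism L : B →* A ∗ FreeMonoid B such that L ∘ f = inl and p ∘ L = id_B. In particular, f is a retract of the inclusion inl : A →* A ∗ FreeMonoid B by maps fixing A. -/
import Mathlib


open Monoid

universe u

/-- Let `f : A →* B` have the left lifting property against all surjective
monoid homomorphisms. Let `ε : FreeMonoid B →* B` be the canonical homomorphism extending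
the identity of `B`, `inl : A →* A ∗ FreeMonoid B` the coproduct inclusion, and
`p := Coprod.lift f ε : A ∗ FreeMonoid B →* B`. Then `p` is surjective and there is
`L : B →* A ∗ FreeMonoid B` with `L ∘ f = inl` and `p ∘ L = id`; in particular `f` is a
retract of `inl` by maps fixing `A`. -/
theorem stmt8 {A B : Type u} [Monoid A] [Monoid B] (f : A →* B)
    (hf : ∀ (N Q : Type u) [Monoid N] [Monoid Q] (p : N →* Q), Function.Surjective p →
      ∀ (u : A →* N) (v : B →* Q), p.comp u = v.comp f →
        ∃ L : B →* N, L.comp f = u ∧ p.comp L = v) :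
    Function.Surjective (Coprod.lift f (FreeMonoid.lift (id : B → B))) ∧
    ∃ L : B →* Coprod A (FreeMonoid B),
      L.comp f = Coprod.inl ∧
      (Coprod.lift f (FreeMonoid.lift (id : B → B))).comp L = MonoidHom.id B := by
  have hs : Function.Surjective (Coprod.lift f (FreeMonoid.lift (id : B → B))) := by
    intro b
    exact ⟨Coprod.inr (FreeMonoid.of b), by simp⟩
  refine ⟨hs, ?_⟩
  exact hf _ _ _ hs Coprod.inl (MonoidHom.id B) (by ext a; simp)
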